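/- Under the bijection from build-tree codes of length n to signed permutations of [n] (with all left-to-right minima positive), a build-tree code satisfies 'there is a v^+ after each v^-' if and only if the corresponding signed permutation has decreasing blocks. -/

import Mathlib

/-- Build-tree codes of length `n` (`true = +`, `false = -`; `(0, -)`
forbidden). -/
def IsBTC (n : ℕ) (c : Fin n → ℕ × Bool) : Prop :=
  ∀ i : Fin n, (c i).1 ≤ i.val ∧ c i ≠ (0, false)

/-- There is a `v⁺` after each `v⁻`. -/
def EachFollowed (n : ℕ) (c : Fin n → ℕ × Bool) : Prop :=
  ∀ i : Fin n, (c i).2 = false → ∃ j : Fin n, i < j ∧ c j = ((c i).1, true)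

/-- Insert the element `e s` immediately after the (unique) entry with value
`j`, where `s` is the sign of that entry. -/
def insAfter (l : List (ℕ × Bool)) (j : ℕ) (e : Bool → ℕ × Bool) : List (ℕ × Bool) :=
  match l with
  | [] => []
  | (a, s) :: t => if a = j then (a, s) :: e s :: t else (a, s) :: insAfter t j e

/-- One step of the incremental construction: given the current signed
permutation `l`, the new element `i` and the code entry `c`:
if `c = 0⁺` insert `i` at the beginning with positive sign; if `c = j⁺`
(`j > 0`) insert `i` after `j` with the sign opposite to that of `j`; if
`c = j⁻` insert `i` after `j` with the same sign as `j`. -/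
def step (l : List (ℕ × Bool)) (i : ℕ) (c : ℕ × Bool) : List (ℕ × Bool) :=
  if c.1 = 0 then (i, true) :: l
  else insAfter l c.1 fun s => (i, if c.2 then !s else s)

/-- The signed permutation of `[n]` built from a build-tree code. -/
def buildSP (n : ℕ) (c : Fin n → ℕ × Bool) : List (ℕ × Bool) :=
  (List.finRange n).foldl (fun l i => step l (i.val + 1) (c i)) []

/-- Decreasing blocks: adjacent entries with the same sign are decreasing. -/
def DecBlocksN (l : List (ℕ × Bool)) : Prop :=
  ∀ i, (h : i + 1 < l.length) →
    (l[i]'(Nat.lt_of_succ_lt h)).2 = (l[i + 1]'h).2 →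
    (l[i + 1]'h).1 < (l[i]'(Nat.lt_of_succ_lt h)).1

/-! ### Auxiliary lemmas -/

lemma decBlocks_iff_splits (l : List (ℕ × Bool)) :
    DecBlocksN l ↔ ∀ A p q B, l = A ++ p :: q :: B → p.2 = q.2 → q.1 < p.1 := by
  constructor
  · intro hD A p q B h hpq
    have hlen : A.length + 1 < l.length := by simp [h]
    have hp : l[A.length]'(Nat.lt_of_succ_lt hlen) = p := by
      subst h; rw [List.getElem_append_right (by omega)]; simp
    have hq : l[A.length + 1]'hlen = q := by
      subst h; rw [List.getElem_append_right (by omega)]; simp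
    have := hD A.length hlen
    rw [hp, hq] at this
    exact this hpq
  · intro hS i h hpq
    have hsplit : l = l.take i ++ l[i] :: l[i+1] :: l.drop (i+2) := by
      conv_lhs => rw [← List.take_append_drop i l]
      rw [List.drop_eq_getElem_cons (by omega), List.drop_eq_getElem_cons (by omega)]
    exact hS _ _ _ _ hsplit hpq

lemma insAfter_split (A : List (ℕ × Bool)) (x : ℕ) (s : Bool) (B : List (ℕ × Bool))
    (e : Bool → ℕ × Bool) (hx : x ∉ A.map Prod.fst) :
    insAfter (A ++ (x, s) :: B) x e = A ++ (x, s) :: e s :: B := by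
  induction A with
  | nil => simp [insAfter]
  | cons a t ih =>
    obtain ⟨a1, a2⟩ := a
    simp only [List.map_cons, List.mem_cons] at hx
    push_neg at hx
    have hne : a1 ≠ x := fun h => hx.1 h.symm
    simp only [List.cons_append, insAfter, if_neg hne, List.append_eq]
    rw [ih hx.2]

/-- The inductive invariant: after `k` steps the list contains exactly the
values `1..k`, without repetition, and the immediate successor of each entry
is characterised by the last code entry pointing at it. -/
def BTInv (n : ℕ) (c : Fin n → ℕ × Bool) (k : ℕ) (L : List (ℕ × Bool)) : Prop :=
  (∀ p ∈ L, 1 ≤ p.1 ∧ p.1 ≤ k) ∧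
  (∀ v : ℕ, 1 ≤ v → v ≤ k → ∃ s, (v, s) ∈ L) ∧
  (L.map Prod.fst).Nodup ∧
  (∀ A x s B, L = A ++ (x, s) :: B →
    ((∀ j : Fin n, j.val < k → (c j).1 ≠ x) ∧ (∀ y t B', B = (y, t) :: B' → y < x))
    ∨ (∃ j : Fin n, j.val < k ∧ (c j).1 = x ∧
        (∀ j' : Fin n, j.val < j'.val → j'.val < k → (c j').1 ≠ x) ∧
        ∃ B', B = ((j.val + 1), if (c j).2 then !s else s) :: B'))

lemma btinv_zero (n : ℕ) (c : Fin n → ℕ × Bool) : BTInv n c 0 [] := by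
  refine ⟨by simp, by intro v h1 h2; omega, by simp, ?_⟩
  intro A x s B h
  exact absurd h (by simp)

lemma btinv_step (n : ℕ) (c : Fin n → ℕ × Bool) (hc : ∀ i : Fin n, (c i).1 ≤ i.val)
    {k : ℕ} {L : List (ℕ × Bool)} (hk : k < n) (hI : BTInv n c k L) :
    BTInv n c (k + 1) (step L (k + 1) (c ⟨k, hk⟩)) := by
  obtain ⟨h1, h2, h3, h4⟩ := hI
  set j0 : Fin n := ⟨k, hk⟩ with hj0
  by_cases h0 : (c j0).1 = 0
  · -- prepend case
    rw [step, if_pos h0]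
    refine ⟨?_, ?_, ?_, ?_⟩
    · rintro p hp
      rcases List.mem_cons.1 hp with rfl | hp
      · exact ⟨by omega, le_refl _⟩
      · have := h1 p hp; omega
    · intro v hv1 hv2
      rcases Nat.lt_or_ge v (k + 1) with h | h
      · obtain ⟨s, hs⟩ := h2 v hv1 (by omega)
        exact ⟨s, List.mem_cons_of_mem _ hs⟩
      · have hv : v = k + 1 := by omega
        subst hv
        exact ⟨true, List.mem_cons_self⟩
    · simp only [List.map_cons, List.nodup_cons]
      refine ⟨?_, h3⟩
      intro hmem
      obtain ⟨p, hp, hfst⟩ := List.mem_map.1 hmem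
      have := h1 p hp; omega
    · intro A x s B hAB
      cases A with
      | nil =>
        rw [List.nil_append] at hAB
        obtain ⟨heq, hB⟩ := List.cons.inj hAB
        obtain ⟨rfl, rfl⟩ := Prod.mk.inj heq.symm
        left
        constructor
        · intro j hj heq2
          have := hc j
          omega
        · rintro y t B' hBB
          rw [← hB] at hBB
          have : (y, t) ∈ L := by rw [hBB]; simp
          have := h1 (y, t) this
          omega
      | cons a A' =>
        rw [List.cons_append] at hAB
        obtain ⟨heq, hL⟩ := List.cons.inj hAB
        have hxmem : (x, s) ∈ L := by rw [hL]; simp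
        have hx1 : 1 ≤ x := (h1 (x, s) hxmem).1
        rcases h4 A' x s B hL with ⟨hno, hsucc⟩ | ⟨j, hjk, hjx, hmax, B', hB'⟩
        · left
          refine ⟨?_, hsucc⟩
          intro j hj
          rcases Nat.lt_or_ge j.val k with h | h
          · exact hno j h
          · have hjj : j = j0 := by apply Fin.ext; simp only [hj0]; omega
            rw [hjj, h0]; omega
        · right
          refine ⟨j, by omega, hjx, ?_, ⟨B', hB'⟩⟩
          intro j' hlt hlt'
          rcases Nat.lt_or_ge j'.val k with h | h
          · exact hmax j' hlt h
          · have hjj : j' = j0 := by apply Fin.ext; simp only [hj0]; omega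
            rw [hjj, h0]; omega
  · -- insertion case
    rw [step, if_neg h0]
    set x0 : ℕ := (c j0).1 with hx0
    have hx0k : x0 ≤ k := hc j0
    obtain ⟨s0, hmem0⟩ := h2 x0 (by omega) hx0k
    obtain ⟨A0, B0, hL⟩ := List.append_of_mem hmem0
    have h3' : (A0.map Prod.fst ++ x0 :: B0.map Prod.fst).Nodup := by
      have := h3
      rw [hL, List.map_append, List.map_cons] at this
      exact this
    have h3c : (x0 :: (A0.map Prod.fst ++ B0.map Prod.fst)).Nodup := by
      rw [← List.nodup_middle]; exact h3'
    have h3cc := List.nodup_cons.1 h3c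
    have hx0A : x0 ∉ A0.map Prod.fst := fun h => h3cc.1 (List.mem_append_left _ h)
    have hx0B : x0 ∉ B0.map Prod.fst := fun h => h3cc.1 (List.mem_append_right _ h)
    set e : Bool → ℕ × Bool := fun s => (k + 1, if (c j0).2 then !s else s) with he
    set σ : Bool := if (c j0).2 then !s0 else s0 with hσ
    have hins : insAfter L x0 e = A0 ++ (x0, s0) :: (k + 1, σ) :: B0 := by
      rw [hL, insAfter_split A0 x0 s0 B0 e hx0A]
    rw [hins]
    have hmemL : ∀ p : ℕ × Bool, p ∈ A0 ++ (x0, s0) :: B0 → 1 ≤ p.1 ∧ p.1 ≤ k := by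
      intro p hp; exact h1 p (by rw [hL]; exact hp)
    refine ⟨?_, ?_, ?_, ?_⟩
    · intro p hp
      simp only [List.mem_append, List.mem_cons] at hp
      rcases hp with hp | hp | hp | hp
      · have := hmemL p (by simp [hp]); omega
      · subst hp; omega
      · subst hp; simp
      · have := hmemL p (by simp [hp]); omega
    · intro v hv1 hv2
      rcases Nat.lt_or_ge v (k + 1) with h | h
      · obtain ⟨s, hs⟩ := h2 v hv1 (by omega)
        rw [hL] at hs
        simp only [List.mem_append, List.mem_cons] at hs
        refine ⟨s, ?_⟩
        simp only [List.mem_append, List.mem_cons]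
        tauto
      · have hv : v = k + 1 := by omega
        subst hv
        exact ⟨σ, by simp⟩
    · have e1 : (A0 ++ (x0, s0) :: (k + 1, σ) :: B0).map Prod.fst
          = (A0.map Prod.fst ++ [x0]) ++ (k + 1) :: B0.map Prod.fst := by simp
      rw [e1, List.nodup_middle, List.nodup_cons]
      constructor
      · intro hmem
        have hmem' : k + 1 ∈ A0.map Prod.fst ∨ k + 1 = x0 ∨ k + 1 ∈ B0.map Prod.fst := by
          simp only [List.mem_append, List.mem_singleton] at hmem
          tauto
        have hex : ∃ p ∈ A0 ++ (x0, s0) :: B0, p.1 = k + 1 := by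
          rcases hmem' with h | h | h
          · obtain ⟨p, hp, hf⟩ := List.mem_map.1 h
            exact ⟨p, by simp [hp], hf⟩
          · exact ⟨(x0, s0), by simp, h.symm⟩
          · obtain ⟨p, hp, hf⟩ := List.mem_map.1 h
            exact ⟨p, by simp [hp], hf⟩
        obtain ⟨p, hp, hf⟩ := hex
        have := hmemL p hp; omega
      · have e2 : A0.map Prod.fst ++ [x0] ++ B0.map Prod.fst
            = A0.map Prod.fst ++ x0 :: B0.map Prod.fst := by simp
        rw [e2]
        exact h3'
    · intro A x s B hAB
      rcases List.append_eq_append_iff.1 hAB with ⟨a', ha1, ha2⟩ | ⟨c', hc1, hc2⟩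
      · -- ha1 : A = A0 ++ a', ha2 : (x0,s0)::(k+1,σ)::B0 = a' ++ (x,s)::B
        cases a' with
        | nil =>
          rw [List.nil_append] at ha2
          obtain ⟨heq, hB⟩ := List.cons.inj ha2
          obtain ⟨rfl, rfl⟩ := Prod.mk.inj heq
          right
          refine ⟨j0, by simp [hj0], hx0.symm, ?_, ⟨B0, by rw [← hσ]; exact hB.symm⟩⟩
          intro j' hlt hlt'
          simp only [hj0] at hlt
          omega
        | cons a t =>
          rw [List.cons_append] at ha2
          obtain ⟨heq1, ha2⟩ := List.cons.inj ha2
          cases t with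
          | nil =>
            rw [List.nil_append] at ha2
            obtain ⟨heq2, hB⟩ := List.cons.inj ha2
            obtain ⟨rfl, rfl⟩ := Prod.mk.inj heq2
            left
            constructor
            · intro j hj heq3
              have := hc j; omega
            · rintro y tt B' hBB
              rw [← hB] at hBB
              have : (y, tt) ∈ A0 ++ (x0, s0) :: B0 := by rw [hBB]; simp
              have := hmemL (y, tt) this
              omega
          | cons a2 t2 =>
            rw [List.cons_append] at ha2
            obtain ⟨heq2, hB0⟩ := List.cons.inj ha2
            -- hB0 : B0 = t2 ++ (x,s) :: B
            have hxne : x ≠ x0 := by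
              intro hxx
              apply hx0B
              rw [hB0, ← hxx]
              simp
            have hLold : L = (A0 ++ (x0, s0) :: t2) ++ (x, s) :: B := by
              rw [hL, hB0]; simp
            rcases h4 _ x s B hLold with ⟨hno, hsucc⟩ | ⟨j, hjk, hjx, hmax, B', hB'⟩
            · left
              refine ⟨?_, hsucc⟩
              intro j hj
              rcases Nat.lt_or_ge j.val k with h | h
              · exact hno j h
              · have hjj : j = j0 := by apply Fin.ext; simp only [hj0]; omega
                rw [hjj, ← hx0]; exact fun h => hxne h.symm
            · right
              refine ⟨j, by omega, hjx, ?_, ⟨B', hB'⟩⟩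
              intro j' hlt hlt'
              rcases Nat.lt_or_ge j'.val k with h | h
              · exact hmax j' hlt h
              · have hjj : j' = j0 := by apply Fin.ext; simp only [hj0]; omega
                rw [hjj, ← hx0]; exact fun h => hxne h.symm
      · -- hc1 : A0 = A ++ c', hc2 : (x,s)::B = c' ++ (x0,s0)::(k+1,σ)::B0
        cases c' with
        | nil =>
          rw [List.nil_append] at hc2
          obtain ⟨heq, hB⟩ := List.cons.inj hc2
          obtain ⟨rfl, rfl⟩ := Prod.mk.inj heq.symm
          right
          refine ⟨j0, by simp [hj0], hx0.symm, ?_, ⟨B0, by rw [← hσ]; exact hB⟩⟩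
          intro j' hlt hlt'
          simp only [hj0] at hlt
          omega
        | cons a t =>
          rw [List.cons_append] at hc2
          obtain ⟨heq, hc2'⟩ := List.cons.inj hc2
          -- heq : (x,s) = a ; hc2' : B = t ++ (x0,s0)::(k+1,σ)::B0
          have hxne : x ≠ x0 := by
            intro hxx
            apply hx0A
            rw [hc1, ← heq, ← hxx]
            simp
          have hLold : L = A ++ (x, s) :: (t ++ (x0, s0) :: B0) := by
            rw [hL, hc1, ← heq]; simp
          rcases h4 _ x s _ hLold with ⟨hno, hsucc⟩ | ⟨j, hjk, hjx, hmax, B', hB'⟩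
          · left
            constructor
            · intro j hj
              rcases Nat.lt_or_ge j.val k with h | h
              · exact hno j h
              · have hjj : j = j0 := by apply Fin.ext; simp only [hj0]; omega
                rw [hjj, ← hx0]; exact fun h => hxne h.symm
            · rintro y tt B'' hBB
              cases t with
              | nil =>
                rw [List.nil_append] at hc2'
                rw [hc2'] at hBB
                obtain ⟨heq2, -⟩ := List.cons.inj hBB
                obtain ⟨hy, -⟩ := Prod.mk.inj heq2
                have := hsucc x0 s0 B0 rfl
                omega
              | cons b tb =>
                rw [List.cons_append] at hc2'
                rw [hc2'] at hBB
                obtain ⟨heq2, -⟩ := List.cons.inj hBB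
                apply hsucc y tt (tb ++ (x0, s0) :: B0)
                rw [List.cons_append, heq2]
          · right
            refine ⟨j, by omega, hjx, ?_, ?_⟩
            · intro j' hlt hlt'
              rcases Nat.lt_or_ge j'.val k with h | h
              · exact hmax j' hlt h
              · have hjj : j' = j0 := by apply Fin.ext; simp only [hj0]; omega
                rw [hjj, ← hx0]; exact fun h => hxne h.symm
            · cases t with
              | nil =>
                rw [List.nil_append] at hc2'
                rw [List.nil_append] at hB'
                obtain ⟨heq2, hB2⟩ := List.cons.inj hB'
                refine ⟨(k + 1, σ) :: B0, ?_⟩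
                rw [hc2', ← heq2]
              | cons b tb =>
                rw [List.cons_append] at hc2' hB'
                obtain ⟨heq2, hB2⟩ := List.cons.inj hB'
                refine ⟨tb ++ (x0, s0) :: (k + 1, σ) :: B0, ?_⟩
                rw [hc2', ← heq2]

/-- Partial build after `k` steps. -/
def partB (n : ℕ) (c : Fin n → ℕ × Bool) (k : ℕ) : List (ℕ × Bool) :=
  ((List.finRange n).take k).foldl (fun l i => step l (i.val + 1) (c i)) []

lemma partB_succ (n : ℕ) (c : Fin n → ℕ × Bool) {k : ℕ} (h : k < n) :
    partB n c (k + 1) = step (partB n c k) (k + 1) (c ⟨k, h⟩) := by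
  rw [partB, List.take_succ, List.foldl_append]
  have hlen : k < (List.finRange n).length := by simp [h]
  rw [List.getElem?_eq_getElem hlen, List.getElem_finRange]
  rfl

lemma buildSP_eq_partB (n : ℕ) (c : Fin n → ℕ × Bool) : buildSP n c = partB n c n := by
  rw [buildSP, partB, List.take_of_length_le (by simp)]

lemma btinv_buildSP (n : ℕ) (c : Fin n → ℕ × Bool) (hc : ∀ i : Fin n, (c i).1 ≤ i.val) :
    BTInv n c n (buildSP n c) := by
  rw [buildSP_eq_partB]
  have key : ∀ k, k ≤ n → BTInv n c k (partB n c k) := by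
    intro k
    induction k with
    | zero =>
      intro _
      have : partB n c 0 = [] := by simp [partB]
      rw [this]; exact btinv_zero n c
    | succ k ih =>
      intro hk
      rw [partB_succ n c (by omega)]
      exact btinv_step n c hc (by omega) (ih (by omega))
  exact key n le_rfl

/-- Under the bijection from build-tree codes to signed permutations, a code
satisfies "there is a `v⁺` after each `v⁻`" iff the corresponding signed
permutation has decreasing blocks. -/
theorem followed_iff_decreasingBlocks (n : ℕ) (c : Fin n → ℕ × Bool)
    (hc : IsBTC n c) :
    EachFollowed n c ↔ DecBlocksN (buildSP n c) := by
  have hc1 : ∀ i : Fin n, (c i).1 ≤ i.val := fun i => (hc i).1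
  obtain ⟨h1, h2, h3, h4⟩ := btinv_buildSP n c hc1
  rw [decBlocks_iff_splits]
  constructor
  · -- EachFollowed → decreasing blocks
    rintro hEF A ⟨x, s⟩ ⟨y, t⟩ B hsplit hpq
    rcases h4 A x s ((y, t) :: B) hsplit with ⟨_, hsucc⟩ | ⟨j, hj, hjx, hmax, B', hB'⟩
    · exact hsucc y t B rfl
    · exfalso
      obtain ⟨heq, _⟩ := List.cons.inj hB'
      obtain ⟨hy, ht⟩ := Prod.mk.inj heq
      cases hb : (c j).2 with
      | false =>
        obtain ⟨j2, hlt, hc2⟩ := hEF j hb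
        apply hmax j2 hlt j2.isLt
        rw [hc2, hjx]
      | true =>
        rw [hb] at ht
        simp only [if_true] at ht
        simp at hpq
        rw [ht] at hpq
        simp at hpq
  · -- decreasing blocks → EachFollowed
    intro hDB i hci2
    set a := (c i).1 with ha
    have ha1 : 1 ≤ a := by
      rcases Nat.eq_zero_or_pos a with h | h
      · exfalso
        apply (hc i).2
        have : c i = ((c i).1, (c i).2) := rfl
        rw [this, ← ha, h, hci2]
      · exact h
    by_contra hno
    push_neg at hno
    -- maximal j ≥ i with (c j).1 = a
    set S : Finset (Fin n) := Finset.univ.filter (fun j => i ≤ j ∧ (c j).1 = a) with hS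
    have hne : S.Nonempty := ⟨i, by simp [hS, ha]⟩
    set j0 : Fin n := S.max' hne with hj0
    have hj0S : j0 ∈ S := S.max'_mem hne
    simp only [hS, Finset.mem_filter, Finset.mem_univ, true_and] at hj0S
    obtain ⟨hij0, hj0a⟩ := hj0S
    have hj0max : ∀ j' : Fin n, j0 < j' → (c j').1 ≠ a := by
      intro j' hlt heq
      have : j' ∈ S := by simp [hS, heq]; exact le_trans hij0 (le_of_lt hlt)
      have := S.le_max' j' this
      exact absurd (lt_of_lt_of_le hlt this) (lt_irrefl _)
    have hj0f : (c j0).2 = false := by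
      rcases eq_or_lt_of_le hij0 with h | h
      · rw [← h]; exact hci2
      · cases hb : (c j0).2 with
        | false => rfl
        | true =>
          exfalso
          apply hno j0 h
          have : c j0 = ((c j0).1, (c j0).2) := rfl
          rw [this, hj0a, hb]
    -- a is in the list
    have haj0 : a ≤ j0.val := by rw [← hj0a]; exact hc1 j0
    obtain ⟨s, hmem⟩ := h2 a ha1 (by omega)
    obtain ⟨A, B, hsplit⟩ := List.append_of_mem hmem
    rcases h4 A a s B hsplit with ⟨hnoj, _⟩ | ⟨j, hj, hja, hmax, B', hB'⟩
    · exact hnoj j0 j0.isLt hj0a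
    · have hjj0 : j = j0 := by
        apply Fin.ext
        have h1' : j0.val ≤ j.val := by
          by_contra hlt
          exact hmax j0 (by omega) j0.isLt hj0a
        have h2' : j.val ≤ j0.val := by
          by_contra hlt
          exact hj0max j (by omega) hja
        omega
      subst hjj0
      rw [hj0f] at hB'
      simp only [Bool.false_eq_true, if_false] at hB'
      have := hDB A (a, s) (j0.val + 1, s) B' (by rw [hsplit, hB']) rfl
      omega
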